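/- Ljunggren's identity: for any natural numbers n, α and real numbers x, y, one has Σ_{k=0}^{n} C(α+k, k) C(n, k) (x−y)^{n−k} y^k = Σ_{k=0}^{n} C(α, k) C(n, k) x^{n−k} y^k. -/

import Mathlib

theorem ljunggren_identity (n α : ℕ) (x y : ℝ) :
    ∑ k ∈ Finset.range (n + 1),
        ((α + k).choose k : ℝ) * (n.choose k : ℝ) * (x - y) ^ (n - k) * y ^ k =
      ∑ k ∈ Finset.range (n + 1),
        (α.choose k : ℝ) * (n.choose k : ℝ) * x ^ (n - k) * y ^ k := by
  have key : ∀ m, m ≤ n → (α + m).choose m * n.choose m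
      = ∑ k ∈ Finset.range (m + 1), α.choose k * (n.choose k * (n - k).choose (m - k)) := by
    intro m hm
    have h1 : ∀ k ∈ Finset.range (m + 1),
        α.choose k * (n.choose k * (n - k).choose (m - k))
          = n.choose m * (α.choose k * m.choose k) := by
      intro k hk
      rw [Finset.mem_range, Nat.lt_succ_iff] at hk
      rw [← Nat.choose_mul (n := n) hk]
      ring
    rw [Finset.sum_congr rfl h1, ← Finset.mul_sum, mul_comm]
    congr 1
    rw [Nat.add_choose_eq, Finset.Nat.sum_antidiagonal_eq_sum_range_succ_mk]
    refine Finset.sum_congr rfl fun k hk => ?_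
    rw [Finset.mem_range, Nat.lt_succ_iff] at hk
    rw [Nat.choose_symm hk]
  symm
  calc
    ∑ k ∈ Finset.range (n + 1), (α.choose k : ℝ) * (n.choose k : ℝ) * x ^ (n - k) * y ^ k
        = ∑ k ∈ Finset.range (n + 1), ∑ j ∈ Finset.range (n - k + 1),
            (α.choose k : ℝ) * (n.choose k : ℝ) * ((n - k).choose j : ℝ)
              * (x - y) ^ (n - k - j) * y ^ (k + j) := by
          refine Finset.sum_congr rfl fun k hk => ?_
          have hp := add_pow y (x - y) (n - k)
          rw [show y + (x - y) = x by ring] at hp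
          rw [hp, Finset.mul_sum, Finset.sum_mul]
          refine Finset.sum_congr rfl fun j hj => ?_
          rw [pow_add]
          ring
    _ = ∑ k ∈ Finset.range (n + 1), ∑ m ∈ Finset.Ico k (n + 1),
            (α.choose k : ℝ) * (n.choose k : ℝ) * ((n - k).choose (m - k) : ℝ)
              * (x - y) ^ (n - m) * y ^ m := by
          refine Finset.sum_congr rfl fun k hk => ?_
          rw [Finset.mem_range, Nat.lt_succ_iff] at hk
          rw [Finset.sum_Ico_eq_sum_range]
          rw [Nat.succ_sub hk]
          refine Finset.sum_congr rfl fun j hj => ?_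
          have h1 : k + j - k = j := by omega
          have h2 : n - (k + j) = n - k - j := by omega
          rw [h1, h2]
    _ = ∑ m ∈ Finset.range (n + 1), ∑ k ∈ Finset.range (m + 1),
            (α.choose k : ℝ) * (n.choose k : ℝ) * ((n - k).choose (m - k) : ℝ)
              * (x - y) ^ (n - m) * y ^ m := by
          rw [Finset.range_eq_Ico, Finset.sum_Ico_Ico_comm]
          simp only [Finset.range_eq_Ico]
    _ = ∑ m ∈ Finset.range (n + 1),
            ((α + m).choose m : ℝ) * (n.choose m : ℝ) * (x - y) ^ (n - m) * y ^ m := by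
          refine Finset.sum_congr rfl fun m hm => ?_
          rw [Finset.mem_range, Nat.lt_succ_iff] at hm
          have := key m hm
          calc
            ∑ k ∈ Finset.range (m + 1),
                (α.choose k : ℝ) * (n.choose k : ℝ) * ((n - k).choose (m - k) : ℝ)
                  * (x - y) ^ (n - m) * y ^ m
              = (∑ k ∈ Finset.range (m + 1),
                  (α.choose k * (n.choose k * (n - k).choose (m - k)) : ℕ) : ℝ)
                  * ((x - y) ^ (n - m) * y ^ m) := by
                push_cast
                rw [Finset.sum_mul]
                refine Finset.sum_congr rfl fun k hk => ?_
                ring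
            _ = ((α + m).choose m : ℝ) * (n.choose m : ℝ) * (x - y) ^ (n - m) * y ^ m := by
                rw [← Nat.cast_sum, ← this]
                push_cast
                ring
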